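/- Let V be a commutative unital quantale with k = ⊤, and let f : (X,a) → (Y,b) be a surjective V-homomorphism of V-groups such that b(y₁,y₂) = ⋁{a(x₁,x₂) : f(x₁)=y₁, f(x₂)=y₂} (a regular epimorphism in VGrp). Then f is open: b(y,f(x)) = ⋁{a(z,x) : f(z)=y} for all y ∈ Y, x ∈ X. -/

import Mathlib

/-- when `k = ⊤`, every regular epimorphism of `V`-groups is open. -/
theorem VGroup_regular_epi_open {V : Type*} [CompleteLattice V] [CommMonoid V]
    (hsup : ∀ (u : V) (S : Set V), u * sSup S = ⨆ v ∈ S, u * v)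
    (hk : (1 : V) = ⊤)
    {X Y : Type*} [AddGroup X] [AddGroup Y]
    (a : X → X → V) (b : Y → Y → V)
    (harefl : ∀ x, (1 : V) ≤ a x x)
    (hatrans : ∀ x y z, a x y * a y z ≤ a x z)
    (hashift : ∀ x x' x'' : X, a x' x'' = a (x' + x) (x'' + x))
    (hbrefl : ∀ y, (1 : V) ≤ b y y)
    (hbtrans : ∀ x y z, b x y * b y z ≤ b x z)
    (hbshift : ∀ y y' y'' : Y, b y' y'' = b (y' + y) (y'' + y))
    (f : X → Y) (hf : ∀ x x', f (x + x') = f x + f x')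
    (hfun : ∀ x x', a x x' ≤ b (f x) (f x'))
    (hsurj : Function.Surjective f)
    (hfinal : ∀ y₁ y₂, b y₁ y₂ = sSup {v | ∃ x₁ x₂, f x₁ = y₁ ∧ f x₂ = y₂ ∧ v = a x₁ x₂}) :
    ∀ (y : Y) (x : X), b y (f x) = sSup {v | ∃ z, f z = y ∧ v = a z x} := by
  intro y x
  have h0 : f 0 = 0 := by
    have h := hf 0 0
    simp only [add_zero] at h
    exact right_eq_add.mp h
  have hneg : ∀ z : X, f (-z) = - f z := by
    intro z
    have h := hf z (-z)
    simp [h0] at h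
    exact (neg_eq_of_add_eq_zero_right h.symm).symm
  apply le_antisymm
  · rw [hfinal]
    apply sSup_le
    rintro v ⟨x₁, x₂, h1, h2, rfl⟩
    apply le_sSup
    refine ⟨x₁ + (-x₂ + x), ?_, ?_⟩
    · rw [hf, hf, h1, hneg, h2]
      simp
    · rw [hashift (-x₂ + x) x₁ x₂, add_neg_cancel_left]
  · apply sSup_le
    rintro v ⟨z, rfl, rfl⟩
    exact hfun z x
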